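/- Let V be a vector space with symmetric bilinear form f whose radical is R = Rad(f), and let a, b ∈ V with f(a,b) ≠ 0. Then {a,b}^⊥⊥ = span(a,b) + R when dim(V/R) is finite. -/
import Mathlib


/-- The perp of a set `S` with respect to a bilinear form `f`. -/
def bilinPerp {K V : Type*} [Field K] [AddCommGroup V] [Module K V]
    (f : V →ₗ[K] V →ₗ[K] K) (S : Set V) : Submodule K V where
  carrier := {v | ∀ s ∈ S, f v s = 0}
  add_mem' := fun ha hb s hs => by simp [ha s hs, hb s hs]
  zero_mem' := fun s hs => by simp
  smul_mem' := fun c a ha s hs => by simp [ha s hs]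

lemma mem_bilinPerp {K V : Type*} [Field K] [AddCommGroup V] [Module K V]
    (f : V →ₗ[K] V →ₗ[K] K) (S : Set V) (x : V) :
    x ∈ bilinPerp f S ↔ ∀ s ∈ S, f x s = 0 := Iff.rfl

/-- For a symmetric bilinear form `f` with radical `R = Rad(f)` such that `V/R` is
finite-dimensional, and `a, b` with `f a b ≠ 0`, the double perp of `{a, b}` equals
`span {a, b} + R`. -/
theorem double_perp_eq_span_sup_radical
    {K V : Type*} [Field K] [AddCommGroup V] [Module K V]
    (f : V →ₗ[K] V →ₗ[K] K)
    (hsymm : ∀ x y : V, f x y = f y x)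
    (R : Submodule K V) (hR : R = bilinPerp f (Set.univ : Set V))
    [FiniteDimensional K (V ⧸ R)]
    (a b : V) (hab : f a b ≠ 0) :
    bilinPerp f (bilinPerp f {a, b} : Submodule K V) =
      Submodule.span K ({a, b} : Set V) ⊔ R := by
  have hRmem : ∀ x : V, x ∈ R ↔ ∀ y : V, f x y = 0 := by
    intro x
    rw [hR, mem_bilinPerp]
    simp
  apply le_antisymm
  · -- hard direction
    intro v hv
    rw [mem_bilinPerp] at hv
    by_contra hvn
    -- the map x ↦ (f x a, f x b, f x v)
    set Φ : V →ₗ[K] (Fin 3 → K) :=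
      LinearMap.pi ![f.flip a, f.flip b, f.flip v] with hΦ
    by_cases he : (Pi.single (2 : Fin 3) (1 : K) : Fin 3 → K) ∈ LinearMap.range Φ
    · obtain ⟨u, hu⟩ := he
      have hua : f u a = 0 := by
        have := congrFun hu 0
        simpa [hΦ, Pi.single] using this
      have hub : f u b = 0 := by
        have := congrFun hu 1
        simpa [hΦ, Pi.single] using this
      have huv : f u v = 1 := by
        have := congrFun hu 2
        simpa [hΦ, Pi.single] using this
      have huU : u ∈ bilinPerp f {a, b} := by
        rw [mem_bilinPerp]
        intro s hs
        rcases hs with rfl | hs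
        · exact hua
        · rcases hs with rfl; exact hub
      have := hv u huU
      rw [hsymm v u, huv] at this
      exact one_ne_zero this
    · obtain ⟨φ, hφe, hφbot⟩ :=
        Submodule.exists_dual_map_eq_bot_of_notMem he inferInstance
      set γ : Fin 3 → K := fun i => φ (Pi.single i 1) with hγ
      have hφy : ∀ y : Fin 3 → K, φ y = y 0 * γ 0 + y 1 * γ 1 + y 2 * γ 2 := by
        intro y
        have hy : y = y 0 • (Pi.single (0 : Fin 3) (1 : K) : Fin 3 → K) +
            y 1 • (Pi.single (1 : Fin 3) (1 : K) : Fin 3 → K) + y 2 • (Pi.single (2 : Fin 3) (1 : K) : Fin 3 → K) := by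
          funext i
          fin_cases i <;> simp [Pi.single_apply]
        rw [hy]
        simp [hγ, mul_comm]
      have hγ2 : γ 2 ≠ 0 := hφe
      have hker : ∀ x : V, φ (Φ x) = 0 := by
        intro x
        have : Φ x ∈ LinearMap.range Φ := ⟨x, rfl⟩
        have := Submodule.mem_map_of_mem (f := φ) this
        rw [hφbot] at this
        simpa using this
      -- the vector w = γ0 a + γ1 b + γ2 v is in the radical
      set w : V := γ 0 • a + γ 1 • b + γ 2 • v with hw
      have hwR : w ∈ R := by
        rw [hRmem]
        intro y
        have h1 := hker y
        rw [hφy] at h1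
        have h2 : Φ y 0 = f y a := by simp [hΦ]
        have h3 : Φ y 1 = f y b := by simp [hΦ]
        have h4 : Φ y 2 = f y v := by simp [hΦ]
        rw [h2, h3, h4] at h1
        have : f y w = 0 := by
          simp only [hw, map_add, map_smul, smul_eq_mul]
          linear_combination h1
        exact (hsymm w y).trans this
      -- hence v ∈ span {a,b} ⊔ R, contradiction
      apply hvn
      have hv' : v = (γ 2)⁻¹ • w - (γ 2)⁻¹ • (γ 0 • a + γ 1 • b) := by
        rw [hw, ← smul_sub]
        have : γ 0 • a + γ 1 • b + γ 2 • v - (γ 0 • a + γ 1 • b) = γ 2 • v := by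
          abel
        rw [this, smul_smul, inv_mul_cancel₀ hγ2, one_smul]
      rw [hv']
      apply Submodule.sub_mem
      · exact Submodule.mem_sup_right (Submodule.smul_mem _ _ hwR)
      · apply Submodule.mem_sup_left
        apply Submodule.smul_mem
        apply Submodule.add_mem
        · exact Submodule.smul_mem _ _ (Submodule.subset_span (by simp))
        · exact Submodule.smul_mem _ _ (Submodule.subset_span (by simp))
  · -- easy direction
    apply sup_le
    · rw [Submodule.span_le]
      intro x hx
      intro s hs
      have hs' : ∀ t ∈ ({a, b} : Set V), f s t = 0 := hs
      rcases hx with rfl | hx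
      · rw [hsymm]; exact hs' x (by simp)
      · rcases hx with rfl
        rw [hsymm]; exact hs' x (by simp)
    · intro r hr
      rw [mem_bilinPerp]
      intro s _
      exact (hRmem r).mp hr s
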